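/- arXiv:1010.2759 — 3 statements merged into one kernel-verified Lean document; each statement's English description precedes it below -/
import Mathlib

section
/- Let c, λ, v, w₁ be real numbers with c² - 1 < 0 and λ² - (c²-1) > 0, and let γ_s = (-cλ + sqrt(λ² - (c²-1)))/(c²-1). If w₂ = ((λ² + 1)/(γ_s (c²-1))) w₁, then the crossing form Γ = ((cos v - λ²)/(c²-1)) w₁² - (2cλ/(c²-1)) w₁ w₂ - w₂² equals ((cos v + 1) w₁²)/(c²-1); in particular Γ is independent of λ. -/
theorem stmt_2 (c lam v w₁ w₂ : ℝ) (hc : c^2 - 1 < 0) (hlam : lam^2 - (c^2 - 1) > 0)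
    (γs : ℝ) (hγs : γs = (-c*lam + Real.sqrt (lam^2 - (c^2 - 1)))/(c^2 - 1))
    (hw₂ : w₂ = ((lam^2 + 1)/(γs * (c^2 - 1))) * w₁) :
    ((Real.cos v - lam^2)/(c^2 - 1)) * w₁^2 - (2*c*lam/(c^2 - 1)) * w₁ * w₂ - w₂^2
      = ((Real.cos v + 1) * w₁^2)/(c^2 - 1) := by
  set s := Real.sqrt (lam^2 - (c^2 - 1)) with hs
  have hc1 : c^2 - 1 ≠ 0 := ne_of_lt hc
  have hs2 : s^2 = lam^2 - (c^2 - 1) := Real.sq_sqrt hlam.le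
  have hprod : (s - c*lam) * (s + c*lam) = (lam^2 + 1) * (1 - (c^2)) := by
    nlinarith [hs2]
  have hfac : (s - c*lam) ≠ 0 := by
    intro h
    rw [h, zero_mul] at hprod
    have h1 : (lam^2 + 1) > 0 := by positivity
    have h2 : (1 - c^2) > 0 := by linarith
    nlinarith
  have hγ : γs * (c^2 - 1) = s - c*lam := by
    rw [hγs]; field_simp; ring
  have hslope : (lam^2 + 1)/(γs * (c^2 - 1)) = -(s + c*lam)/(c^2 - 1) := by
    rw [hγ, div_eq_div_iff hfac hc1]
    linarith [hprod]
  rw [hslope] at hw₂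
  subst hw₂
  field_simp
  ring_nf
  linear_combination (-w₁^2) * hs2
end

section
/- Let c > 1 and let λ ∈ ℂ with Re λ > 0. Then both characteristic exponents r_{1,2} = (cλ ± sqrt(λ² + (1-c²)))/(1-c²) of the asymptotic equation (1-c²)φ'' - 2cλφ' - (λ²+1)φ = 0 have limits as c → 1⁺ whose real parts are negative: lim_{c→1⁺} Re r₁ has the sign of -Re(2λ) and lim_{c→1⁺} Re r₂ has the sign of -Re(λ + 1/λ). -/
open Filter

theorem stmt_13 (lam : ℂ) (hre : 0 < lam.re) :
    Tendsto (fun c : ℝ =>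
        ((((c : ℂ)*lam + (lam^2 + (1 - (c : ℂ)^2)) ^ ((1 : ℂ)/2)) / (1 - (c : ℂ)^2)).re))
      (nhdsWithin 1 (Set.Ioi 1)) atBot ∧
    Tendsto (fun c : ℝ =>
        (((c : ℂ)*lam - (lam^2 + (1 - (c : ℂ)^2)) ^ ((1 : ℂ)/2)) / (1 - (c : ℂ)^2)))
      (nhdsWithin 1 (Set.Ioi 1)) (nhds (-(lam + 1/lam)/2)) ∧
    (-(lam + 1/lam)/2).re < 0 := by
  set L := nhdsWithin (1 : ℝ) (Set.Ioi 1)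
  have hlam : lam ≠ 0 := fun h => by simp [h] at hre
  have hsq_slit : lam ^ 2 ∈ Complex.slitPlane := by
    rw [Complex.mem_slitPlane_iff]
    rcases eq_or_ne lam.im 0 with h | h
    · left
      simp [pow_two, Complex.mul_re, h]
      positivity
    · right
      have : (lam ^ 2).im = 2 * lam.re * lam.im := by
        simp [pow_two, Complex.mul_im]; ring
      rw [this]
      positivity
  -- limit of inner argument
  have hz : Tendsto (fun c : ℝ => lam ^ 2 + (1 - (c : ℂ) ^ 2)) L (nhds (lam ^ 2)) := by
    have hc : Continuous fun c : ℝ => lam ^ 2 + (1 - (c : ℂ) ^ 2) := by continuity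
    have := (hc.tendsto 1).mono_left (nhdsWithin_le_nhds (s := Set.Ioi 1))
    simpa using this
  -- limit of the square root
  have hsqrt_val : (lam ^ 2) ^ ((1 : ℂ)/2) = lam := by
    rw [one_div, show lam ^ 2 = lam ^ (2 : ℕ) by norm_num]
    exact Complex.sq_cpow_two_inv hre
  have hs : Tendsto (fun c : ℝ =>
      (lam ^ 2 + (1 - (c : ℂ) ^ 2)) ^ ((1 : ℂ)/2)) L (nhds lam) := by
    have := (continuousAt_cpow_const (b := (1 : ℂ)/2) hsq_slit).tendsto.comp hz
    rwa [hsqrt_val] at this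
  -- limit of c * lam
  have hclam : Tendsto (fun c : ℝ => (c : ℂ) * lam) L (nhds lam) := by
    have hc : Continuous fun c : ℝ => (c : ℂ) * lam := by continuity
    have := (hc.tendsto 1).mono_left (nhdsWithin_le_nhds (s := Set.Ioi 1))
    simpa using this
  have hden : Tendsto (fun c : ℝ =>
      (c : ℂ) * lam + (lam ^ 2 + (1 - (c : ℂ) ^ 2)) ^ ((1 : ℂ)/2)) L (nhds (2 * lam)) := by
    have := hclam.add hs
    rwa [← two_mul] at this
  have h2lam : (2 : ℂ) * lam ≠ 0 := mul_ne_zero two_ne_zero hlam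
  have hmem : ∀ᶠ c : ℝ in L, c ∈ Set.Ioi (1 : ℝ) := self_mem_nhdsWithin
  -- part 1
  have part1 : Tendsto (fun c : ℝ =>
      ((((c : ℂ)*lam + (lam^2 + (1 - (c : ℂ)^2)) ^ ((1 : ℂ)/2)) / (1 - (c : ℂ)^2)).re))
      L atBot := by
    have hA : Tendsto (fun c : ℝ => c ^ 2 - 1) L (nhdsWithin 0 (Set.Ioi 0)) := by
      apply tendsto_nhdsWithin_of_tendsto_nhds_of_eventually_within
      · have hc : Continuous fun c : ℝ => c ^ 2 - 1 := by continuity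
        have := (hc.tendsto 1).mono_left (nhdsWithin_le_nhds (s := Set.Ioi 1))
        simpa using this
      · filter_upwards [hmem] with c hc
        have h1c : (1 : ℝ) < c := hc
        simp only [Set.mem_Ioi]
        nlinarith
    have hB : Tendsto (fun c : ℝ => (c ^ 2 - 1)⁻¹) L atTop :=
      tendsto_inv_nhdsGT_zero.comp hA
    have hC : Tendsto (fun c : ℝ => -(c ^ 2 - 1)⁻¹) L atBot :=
      tendsto_neg_atTop_atBot.comp hB
    have hnum : Tendsto (fun c : ℝ =>
        ((c : ℂ) * lam + (lam ^ 2 + (1 - (c : ℂ) ^ 2)) ^ ((1 : ℂ)/2)).re) L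
        (nhds ((2 * lam).re)) := (Complex.continuous_re.tendsto _).comp hden
    have hpos : 0 < (2 * lam).re := by
      simp [Complex.mul_re]; linarith
    have := Filter.Tendsto.pos_mul_atBot hpos hnum hC
    refine this.congr fun c => ?_
    have hcast : (1 - (c : ℂ) ^ 2) = ((1 - c ^ 2 : ℝ) : ℂ) := by push_cast; ring
    rw [hcast, Complex.div_ofReal_re]
    rw [div_eq_mul_inv]
    congr 1
    rw [← inv_neg]
    congr 1
    ring
  refine ⟨part1, ?_, ?_⟩
  · -- part 2
    have hne : ∀ᶠ c : ℝ in L,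
        (c : ℂ) * lam + (lam ^ 2 + (1 - (c : ℂ) ^ 2)) ^ ((1 : ℂ)/2) ≠ 0 :=
      hden.eventually_ne h2lam
    have hzne : ∀ᶠ c : ℝ in L, lam ^ 2 + (1 - (c : ℂ) ^ 2) ≠ 0 :=
      hz.eventually_ne (pow_ne_zero 2 hlam)
    have key : Tendsto (fun c : ℝ =>
        -(lam ^ 2 + 1) / ((c : ℂ) * lam + (lam ^ 2 + (1 - (c : ℂ) ^ 2)) ^ ((1 : ℂ)/2)))
        L (nhds (-(lam ^ 2 + 1) / (2 * lam))) :=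
      tendsto_const_nhds.div hden h2lam
    have hval : -(lam ^ 2 + 1) / (2 * lam) = -(lam + 1/lam)/2 := by
      field_simp
    rw [hval] at key
    refine key.congr' ?_
    filter_upwards [hmem, hne, hzne] with c hc hne hzne
    have hc1 : (1 : ℝ) < c := hc
    have hcne : (1 : ℂ) - (c : ℂ) ^ 2 ≠ 0 := by
      intro h
      have : ((1 - c ^ 2 : ℝ) : ℂ) = 0 := by push_cast; linear_combination h
      have h2 : (1 - c ^ 2 : ℝ) = 0 := by exact_mod_cast this
      nlinarith
    set s := (lam ^ 2 + (1 - (c : ℂ) ^ 2)) ^ ((1 : ℂ)/2) with hsdef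
    have hss : s * s = lam ^ 2 + (1 - (c : ℂ) ^ 2) := by
      rw [hsdef, ← Complex.cpow_add _ _ hzne]
      norm_num
    rw [div_eq_div_iff hne, neg_mul]
    · linear_combination hss
    · exact hcne
  · -- part 3
    have hns : 0 < Complex.normSq lam := Complex.normSq_pos.2 hlam
    have h1 : (1 / lam).re = lam.re / Complex.normSq lam := by
      simp [one_div, Complex.inv_re]
    have : (-(lam + 1/lam)/2).re = -((lam.re + lam.re / Complex.normSq lam) / 2) := by
      simp [Complex.div_re, Complex.neg_re, Complex.add_re, h1]
      ring
    rw [this]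
    have : 0 < lam.re / Complex.normSq lam := div_pos hre hns
    linarith
end

section
/- Let c ∈ ℝ with 0 < c² < 1 and let v : ℝ → ℝ be defined by v(z) = 4 arctan( exp( z / sqrt(1-c²) ) ) - π. Then v satisfies (c²-1)v'' = sin v on ℝ, v(z) → -π as z → -∞, v(z) → π as z → +∞, and v'(z) = sqrt( 2(cos(v(z)) + 1)/(1 - c²) ) for all z. -/
open Real Filter

theorem stmt_15 (c : ℝ) (hc0 : 0 < c^2) (hc1 : c^2 < 1) (v : ℝ → ℝ)
    (hv : v = fun z => 4 * Real.arctan (Real.exp (z / Real.sqrt (1 - c^2))) - π) :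
    (∀ z, (c^2 - 1) * deriv (deriv v) z = Real.sin (v z)) ∧
    Tendsto v atBot (nhds (-π)) ∧
    Tendsto v atTop (nhds π) ∧
    (∀ z, deriv v z = Real.sqrt (2 * (Real.cos (v z) + 1) / (1 - c^2))) := by
  have h1 : (0:ℝ) < 1 - c^2 := by linarith
  set s := Real.sqrt (1 - c^2) with hs
  have hs0 : 0 < s := Real.sqrt_pos.mpr h1
  have hs2 : s^2 = 1 - c^2 := Real.sq_sqrt h1.le
  set g : ℝ → ℝ := fun z => Real.exp (z / s) with hgdef
  have hgpos : ∀ z, 0 < g z := fun z => Real.exp_pos _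
  have hg : ∀ z : ℝ, HasDerivAt g (g z / s) z := by
    intro z
    have h := (Real.hasDerivAt_exp (z / s)).comp z ((hasDerivAt_id z).div_const s)
    simpa [hgdef, div_eq_mul_inv, Function.comp_def] using h
  have hden : ∀ z : ℝ, (0:ℝ) < 1 + g z ^ 2 := fun z => by positivity
  have hv1 : ∀ z, HasDerivAt v (4 * g z / (s * (1 + g z ^ 2))) z := by
    intro z
    rw [hv]
    have h := ((Real.hasDerivAt_arctan (g z)).comp z (hg z)).const_mul 4
    have h2 := h.sub_const π
    refine h2.congr_deriv ?_
    have := (hden z).ne'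
    field_simp
  have hD : deriv v = fun z => 4 * g z / (s * (1 + g z ^ 2)) :=
    funext fun z => (hv1 z).deriv
  have hv2 : ∀ z, HasDerivAt (deriv v)
      ((4 * (g z / s) * (s * (1 + g z ^ 2)) - 4 * g z * (s * (2 * g z ^ 1 * (g z / s)))) /
        (s * (1 + g z ^ 2)) ^ 2) z := by
    intro z
    rw [hD]
    exact HasDerivAt.div ((hg z).const_mul 4) ((((hg z).pow 2).const_add 1).const_mul s)
      (by positivity)
  -- trig identities
  have key : ∀ z : ℝ, Real.sin (v z) = 4 * g z * (g z ^ 2 - 1) / (1 + g z ^ 2) ^ 2 ∧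
      Real.cos (v z) + 1 = 8 * g z ^ 2 / (1 + g z ^ 2) ^ 2 := by
    intro z
    set t := g z with ht
    have hq : Real.sqrt (1 + t ^ 2) ^ 2 = 1 + t ^ 2 := Real.sq_sqrt (by positivity)
    have hq0 : 0 < Real.sqrt (1 + t ^ 2) := Real.sqrt_pos.mpr (by positivity)
    have hvz : v z = 2 * (2 * Real.arctan t) - π := by
      rw [hv]
      show 4 * Real.arctan t - π = 2 * (2 * Real.arctan t) - π
      ring
    constructor
    · rw [hvz, Real.sin_sub_pi, Real.sin_two_mul, Real.sin_two_mul, Real.cos_two_mul,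
        Real.sin_arctan, Real.cos_arctan]
      field_simp
      have h4 : Real.sqrt (1 + t ^ 2) ^ 4 = (1 + t ^ 2) ^ 2 := by
        rw [show Real.sqrt (1 + t ^ 2) ^ 4 = (Real.sqrt (1 + t ^ 2) ^ 2) ^ 2 by ring, hq]
      rw [h4, hq]; ring
    · rw [hvz, Real.cos_sub_pi, Real.cos_two_mul, Real.cos_two_mul, Real.cos_arctan]
      field_simp
      have h4 : Real.sqrt (1 + t ^ 2) ^ 4 = (1 + t ^ 2) ^ 2 := by
        rw [show Real.sqrt (1 + t ^ 2) ^ 4 = (Real.sqrt (1 + t ^ 2) ^ 2) ^ 2 by ring, hq]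
      rw [h4, hq]; ring
  refine ⟨?_, ?_, ?_, ?_⟩
  · intro z
    rw [(hv2 z).deriv, (key z).1]
    have h2 : s * (1 + g z ^ 2) ≠ 0 := by positivity
    have hc : c ^ 2 - 1 = -s ^ 2 := by rw [hs2]; ring
    rw [hc]
    field_simp
    ring
  · rw [hv]
    have h0 : Tendsto (fun z : ℝ => z / s) atBot atBot :=
      tendsto_id.atBot_div_const hs0
    have h1' : Tendsto (fun z : ℝ => Real.arctan (Real.exp (z / s))) atBot (nhds 0) := by
      have := (Real.continuous_arctan.tendsto 0).comp (Real.tendsto_exp_atBot.comp h0)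
      simpa [Real.arctan_zero, Function.comp_def] using this
    have := (h1'.const_mul 4).sub_const π
    simpa using this
  · rw [hv]
    have h0 : Tendsto (fun z : ℝ => z / s) atTop atTop :=
      tendsto_id.atTop_div_const hs0
    have h1' : Tendsto (fun z : ℝ => Real.arctan (Real.exp (z / s))) atTop (nhds (π / 2)) := by
      have := (tendsto_nhds_of_tendsto_nhdsWithin Real.tendsto_arctan_atTop).comp
        (Real.tendsto_exp_atTop.comp h0)
      exact this
    have := (h1'.const_mul 4).sub_const π
    have h4 : 4 * (π / 2) - π = π := by ring
    rw [h4] at this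
    exact this
  · intro z
    rw [(hv1 z).deriv, (key z).2]
    have heq : 2 * (8 * g z ^ 2 / (1 + g z ^ 2) ^ 2) / (1 - c ^ 2) =
        (4 * g z / (s * (1 + g z ^ 2))) ^ 2 := by
      rw [← hs2]
      have h2 : s * (1 + g z ^ 2) ≠ 0 := by positivity
      field_simp
      ring
    rw [heq, Real.sqrt_sq (by positivity)]
end
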